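/- For constants α, β, k > 0 with k > αβ, the function φ(R) = (βR₁ + αR₂ + √((βR₁ + αR₂)² + 4(k−αβ)R₁R₂)) / (2(k−αβ)) on ℝ₊² satisfies φ(R) ≥ 1 if and only if (R₁+α)(R₂+β) ≥ k, and φ is positively homogeneous and concave. -/

import Mathlib

open Real

/-- Superadditivity of the sqrt term (reverse Cauchy–Schwarz for the Lorentz form). -/
private lemma univ3_sqrt_superadd (α β η x y p q : ℝ) (hα : 0 < α) (hβ : 0 < β)
    (hη : 0 < η) (hx : 0 ≤ x) (hy : 0 ≤ y) (hp : 0 ≤ p) (hq : 0 ≤ q) :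
    Real.sqrt ((β * x + α * y) ^ 2 + 4 * η * x * y) +
      Real.sqrt ((β * p + α * q) ^ 2 + 4 * η * p * q) ≤
    Real.sqrt ((β * (x + p) + α * (y + q)) ^ 2 + 4 * η * (x + p) * (y + q)) := by
  set F1 : ℝ := (β * x + α * y) ^ 2 + 4 * η * x * y with hF1
  set F2 : ℝ := (β * p + α * q) ^ 2 + 4 * η * p * q with hF2
  have hF1n : 0 ≤ F1 := by positivity
  have hF2n : 0 ≤ F2 := by positivity
  set B : ℝ := (β * x + α * y) * (β * p + α * q) + 2 * η * (x * q + y * p) with hB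
  have hBn : 0 ≤ B := by positivity
  have hkey : F1 * F2 ≤ B ^ 2 := by
    have hid : B ^ 2 - F1 * F2 = 4 * η * (α * β + η) * (x * q - y * p) ^ 2 := by
      simp only [hF1, hF2, hB]; ring
    have h0 : 0 ≤ 4 * η * (α * β + η) * (x * q - y * p) ^ 2 := by positivity
    linarith
  have hmul : Real.sqrt F1 * Real.sqrt F2 ≤ B := by
    rw [← Real.sqrt_mul hF1n]
    calc Real.sqrt (F1 * F2) ≤ Real.sqrt (B ^ 2) := Real.sqrt_le_sqrt hkey
      _ = B := Real.sqrt_sq hBn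
  have hexp : (β * (x + p) + α * (y + q)) ^ 2 + 4 * η * (x + p) * (y + q)
      = F1 + F2 + 2 * B := by simp only [hF1, hF2, hB]; ring
  rw [hexp, show (Real.sqrt F1 + Real.sqrt F2 = Real.sqrt ((Real.sqrt F1 + Real.sqrt F2) ^ 2)) from
    (Real.sqrt_sq (by positivity)).symm]
  apply Real.sqrt_le_sqrt
  have e1 : Real.sqrt F1 ^ 2 = F1 := Real.sq_sqrt hF1n
  have e2 : Real.sqrt F2 ^ 2 = F2 := Real.sq_sqrt hF2n
  nlinarith [hmul]

theorem univ3_canonical_trading_function (α β k : ℝ) (hα : 0 < α) (hβ : 0 < β)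
    (hk : α * β < k)
    (φ : ℝ × ℝ → ℝ)
    (hφ : ∀ R, φ R = (β * R.1 + α * R.2 +
      Real.sqrt ((β * R.1 + α * R.2) ^ 2 + 4 * (k - α * β) * R.1 * R.2)) /
        (2 * (k - α * β))) :
    (∀ R : ℝ × ℝ, 0 ≤ R → (1 ≤ φ R ↔ k ≤ (R.1 + α) * (R.2 + β))) ∧
      (∀ (a : ℝ) (R : ℝ × ℝ), 0 ≤ a → 0 ≤ R → φ (a • R) = a * φ R) ∧
      ConcaveOn ℝ {R : ℝ × ℝ | 0 ≤ R} φ := by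
  have hη : 0 < k - α * β := by linarith
  refine ⟨?_, ?_, ?_⟩
  · -- the iff
    rintro ⟨x, y⟩ hR
    obtain ⟨hx, hy⟩ : 0 ≤ x ∧ 0 ≤ y := ⟨hR.1, hR.2⟩
    rw [hφ]
    set L : ℝ := β * x + α * y with hL
    set s : ℝ := Real.sqrt (L ^ 2 + 4 * (k - α * β) * x * y) with hs
    have hsn : 0 ≤ s := Real.sqrt_nonneg _
    have hs2 : s ^ 2 = L ^ 2 + 4 * (k - α * β) * x * y := Real.sq_sqrt (by positivity)
    simp only
    rw [le_div_iff₀ (by linarith), one_mul]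
    constructor
    · intro h
      have key : k - α * β ≤ x * y + L := by
        rcases le_or_gt (2 * (k - α * β)) L with hc | hc
        · nlinarith [mul_nonneg hx hy]
        · have hts : 2 * (k - α * β) - L ≤ s := by linarith
          have hsq : (2 * (k - α * β) - L) ^ 2 ≤ s ^ 2 :=
            pow_le_pow_left₀ (by linarith) hts 2
          rw [hs2] at hsq
          nlinarith
      nlinarith [key]
    · intro h
      have hgoal : k - α * β ≤ x * y + L := by nlinarith
      rcases le_or_gt (2 * (k - α * β)) L with hc | hc
      · linarith
      · have : 2 * (k - α * β) - L ≤ s := by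
          rw [hs, Real.le_sqrt (by linarith) (by positivity)]
          nlinarith
        linarith
  · -- homogeneity
    rintro a ⟨x, y⟩ ha hR
    rw [hφ, hφ]
    simp only [Prod.smul_fst, Prod.smul_snd, smul_eq_mul]
    have h1 : (β * (a * x) + α * (a * y)) ^ 2 + 4 * (k - α * β) * (a * x) * (a * y)
        = a ^ 2 * ((β * x + α * y) ^ 2 + 4 * (k - α * β) * x * y) := by ring
    rw [h1, Real.sqrt_mul (by positivity), Real.sqrt_sq ha]
    ring
  · -- concavity
    have hconv : Convex ℝ {R : ℝ × ℝ | 0 ≤ R} := by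
      intro R hR Q hQ a b ha hb hab
      simp only [Set.mem_setOf_eq, Prod.le_def, Prod.fst_add, Prod.snd_add,
        Prod.smul_fst, Prod.smul_snd, smul_eq_mul, Prod.fst_zero, Prod.snd_zero] at *
      exact ⟨add_nonneg (mul_nonneg ha hR.1) (mul_nonneg hb hQ.1),
        add_nonneg (mul_nonneg ha hR.2) (mul_nonneg hb hQ.2)⟩
    refine ⟨hconv, ?_⟩
    rintro ⟨x, y⟩ hR ⟨p, q⟩ hQ a b ha hb hab
    obtain ⟨hx, hy⟩ : 0 ≤ x ∧ 0 ≤ y := ⟨hR.1, hR.2⟩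
    obtain ⟨hp, hq⟩ : 0 ≤ p ∧ 0 ≤ q := ⟨hQ.1, hQ.2⟩
    simp only [hφ, Prod.smul_fst, Prod.smul_snd, Prod.fst_add, Prod.snd_add, smul_eq_mul]
    have hsa := univ3_sqrt_superadd α β (k - α * β) (a * x) (a * y) (b * p) (b * q)
      hα hβ hη (by positivity) (by positivity) (by positivity) (by positivity)
    have h1 : Real.sqrt ((β * (a * x) + α * (a * y)) ^ 2 + 4 * (k - α * β) * (a * x) * (a * y))
        = a * Real.sqrt ((β * x + α * y) ^ 2 + 4 * (k - α * β) * x * y) := by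
      rw [show (β * (a * x) + α * (a * y)) ^ 2 + 4 * (k - α * β) * (a * x) * (a * y)
        = a ^ 2 * ((β * x + α * y) ^ 2 + 4 * (k - α * β) * x * y) from by ring,
        Real.sqrt_mul (by positivity), Real.sqrt_sq ha]
    have h2 : Real.sqrt ((β * (b * p) + α * (b * q)) ^ 2 + 4 * (k - α * β) * (b * p) * (b * q))
        = b * Real.sqrt ((β * p + α * q) ^ 2 + 4 * (k - α * β) * p * q) := by
      rw [show (β * (b * p) + α * (b * q)) ^ 2 + 4 * (k - α * β) * (b * p) * (b * q)
        = b ^ 2 * ((β * p + α * q) ^ 2 + 4 * (k - α * β) * p * q) from by ring,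
        Real.sqrt_mul (by positivity), Real.sqrt_sq hb]
    rw [h1, h2] at hsa
    rw [← mul_div_assoc, ← mul_div_assoc, ← add_div,
      div_le_div_iff₀ (by linarith) (by linarith)]
    nlinarith [hsa, hη]
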